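/- Consider the tetrahedral N = 3 JNR data with equal unit weights and poles a₀ = (1,1,1), a₁ = (1,−1,−1), a₂ = (−1,1,−1), a₃ = (−1,−1,1) in ℝ³. Then the set of x ∈ ℝ³ ∖ {a₀, a₁, a₂, a₃} satisfying ζ(x) = Σᵢ₌₀³ (x − aᵢ)/‖x − aᵢ‖² = 0 is exactly {(0,0,0), (1/3,1/3,1/3), (1/3,−1/3,−1/3), (−1/3,1/3,−1/3), (−1/3,−1/3,1/3)}. -/

import Mathlib

/-- The point `(p, q, r)` of `ℝ³` as an element of `EuclideanSpace ℝ (Fin 3)`. -/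
noncomputable def pt (p q r : ℝ) : EuclideanSpace ℝ (Fin 3) :=
  (WithLp.equiv 2 (Fin 3 → ℝ)).symm ![p, q, r]

/-- The tetrahedral `N = 3` JNR poles: alternating vertices of the cube `[-1,1]³`. -/
noncomputable def tetraPoles : Fin 4 → EuclideanSpace ℝ (Fin 3) :=
  ![pt 1 1 1, pt 1 (-1) (-1), pt (-1) 1 (-1), pt (-1) (-1) 1]

lemma diag3 (t : ℝ) (h : t*(3*t-1)*(t-1)*(3*t^2+2*t+3)^2 = 0) : t = 0 ∨ t = 1/3 ∨ t = 1 := by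
  have hq : (3*t^2+2*t+3) > 0 := by nlinarith [sq_nonneg (3*t+1)]
  have hq2 : (3*t^2+2*t+3)^2 ≠ 0 := by positivity
  rcases mul_eq_zero.mp h with h' | h'
  · rcases mul_eq_zero.mp h' with h'' | h''
    · rcases mul_eq_zero.mp h'' with h3 | h3
      · exact Or.inl h3
      · exact Or.inr (Or.inl (by linarith))
    · exact Or.inr (Or.inr (by linarith))
  · exact absurd h' hq2

lemma lastvar (r : ℝ) (h : r*(r^6+3*r^4+11*r^2+9) = 0) : r = 0 := by
  have : r^6+3*r^4+11*r^2+9 > 0 := by positivity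
  rcases mul_eq_zero.mp h with h' | h'
  · exact h'
  · linarith

lemma caseSq (p q r : ℝ)
    (h1 : p*((p^2+q^2+r^2)^3+3*(p^2+q^2+r^2)^2-5*(p^2+q^2+r^2)+9+16*p^2)
          - 8*q*r*(2*p^2+(p^2+q^2+r^2+3)) = 0)
    (hpq : p^2-q^2 = 0) (hqr : q^2-r^2 = 0) :
    (p = 0 ∧ q = 0 ∧ r = 0) ∨ (p = 1/3 ∧ q = 1/3 ∧ r = 1/3) ∨
    (p = 1/3 ∧ q = -(1/3) ∧ r = -(1/3)) ∨ (p = -(1/3) ∧ q = 1/3 ∧ r = -(1/3)) ∨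
    (p = -(1/3) ∧ q = -(1/3) ∧ r = 1/3) ∨ (p = 1 ∧ q = 1 ∧ r = 1) ∨
    (p = 1 ∧ q = -1 ∧ r = -1) ∨ (p = -1 ∧ q = 1 ∧ r = -1) ∨ (p = -1 ∧ q = -1 ∧ r = 1) := by
  have hq : (q-p)*(q+p) = 0 := by linear_combination -hpq
  have hr : (r-p)*(r+p) = 0 := by linear_combination -hqr - hpq
  rcases mul_eq_zero.mp hq with hq' | hq' <;> rcases mul_eq_zero.mp hr with hr' | hr'
  · have hq2 : q = p := by linarith
    have hr2 : r = p := by linarith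
    rw [hq2, hr2] at h1
    rcases diag3 (p) (by linear_combination h1) with h | h | h
    · exact Or.inl ⟨by linarith, by linarith, by linarith⟩
    · exact Or.inr (Or.inl ⟨by linarith, by linarith, by linarith⟩)
    · exact Or.inr (Or.inr (Or.inr (Or.inr (Or.inr (Or.inl ⟨by linarith, by linarith, by linarith⟩)))))
  · have hq2 : q = p := by linarith
    have hr2 : r = -p := by linarith
    rw [hq2, hr2] at h1
    rcases diag3 (-p) (by linear_combination -h1) with h | h | h
    · exact Or.inl ⟨by linarith, by linarith, by linarith⟩
    · exact Or.inr (Or.inr (Or.inr (Or.inr (Or.inl ⟨by linarith, by linarith, by linarith⟩))))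
    · exact Or.inr (Or.inr (Or.inr (Or.inr (Or.inr (Or.inr (Or.inr (Or.inr ⟨by linarith, by linarith, by linarith⟩)))))))
  · have hq2 : q = -p := by linarith
    have hr2 : r = p := by linarith
    rw [hq2, hr2] at h1
    rcases diag3 (-p) (by linear_combination -h1) with h | h | h
    · exact Or.inl ⟨by linarith, by linarith, by linarith⟩
    · exact Or.inr (Or.inr (Or.inr (Or.inl ⟨by linarith, by linarith, by linarith⟩)))
    · exact Or.inr (Or.inr (Or.inr (Or.inr (Or.inr (Or.inr (Or.inr (Or.inl ⟨by linarith, by linarith, by linarith⟩)))))))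
  · have hq2 : q = -p := by linarith
    have hr2 : r = -p := by linarith
    rw [hq2, hr2] at h1
    rcases diag3 (p) (by linear_combination h1) with h | h | h
    · exact Or.inl ⟨by linarith, by linarith, by linarith⟩
    · exact Or.inr (Or.inr (Or.inl ⟨by linarith, by linarith, by linarith⟩))
    · exact Or.inr (Or.inr (Or.inr (Or.inr (Or.inr (Or.inr (Or.inl ⟨by linarith, by linarith, by linarith⟩))))))

set_option maxHeartbeats 1000000 in
lemma solve3 (p q r : ℝ)
    (h1 : p*((p^2+q^2+r^2)^3+3*(p^2+q^2+r^2)^2-5*(p^2+q^2+r^2)+9+16*p^2)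
          - 8*q*r*(2*p^2+(p^2+q^2+r^2+3)) = 0)
    (h2 : q*((p^2+q^2+r^2)^3+3*(p^2+q^2+r^2)^2-5*(p^2+q^2+r^2)+9+16*q^2)
          - 8*p*r*(2*q^2+(p^2+q^2+r^2+3)) = 0)
    (h3 : r*((p^2+q^2+r^2)^3+3*(p^2+q^2+r^2)^2-5*(p^2+q^2+r^2)+9+16*r^2)
          - 8*p*q*(2*r^2+(p^2+q^2+r^2+3)) = 0) :
    (p = 0 ∧ q = 0 ∧ r = 0) ∨ (p = 1/3 ∧ q = 1/3 ∧ r = 1/3) ∨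
    (p = 1/3 ∧ q = -(1/3) ∧ r = -(1/3)) ∨ (p = -(1/3) ∧ q = 1/3 ∧ r = -(1/3)) ∨
    (p = -(1/3) ∧ q = -(1/3) ∧ r = 1/3) ∨ (p = 1 ∧ q = 1 ∧ r = 1) ∨
    (p = 1 ∧ q = -1 ∧ r = -1) ∨ (p = -1 ∧ q = 1 ∧ r = -1) ∨ (p = -1 ∧ q = -1 ∧ r = 1) := by
  have hA : (p^2-q^2)*(2*p*q+r*(p^2+q^2+r^2+3)) = 0 := by linear_combination (q*h1 - p*h2)/8
  have hB : (q^2-r^2)*(2*q*r+p*(p^2+q^2+r^2+3)) = 0 := by linear_combination (r*h2 - q*h3)/8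
  have hC : (r^2-p^2)*(2*r*p+q*(p^2+q^2+r^2+3)) = 0 := by linear_combination (p*h3 - r*h1)/8
  rcases mul_eq_zero.mp hA with hA' | hA' <;> rcases mul_eq_zero.mp hB with hB' | hB'
  · exact caseSq p q r h1 hA' hB'
  · rcases mul_eq_zero.mp hC with hC' | hC'
    · exact caseSq p q r h1 hA' (by linarith)
    · have e1 : (p+q)*(2*r+(p^2+q^2+r^2+3)) = 0 := by linear_combination hB' + hC'
      have e2 : (p-q)*((p^2+q^2+r^2+3)-2*r) = 0 := by linear_combination hB' - hC'
      have pos1 : 2*r+(p^2+q^2+r^2+3) > 0 := by nlinarith [sq_nonneg (r+1), sq_nonneg p, sq_nonneg q]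
      have pos2 : (p^2+q^2+r^2+3)-2*r > 0 := by nlinarith [sq_nonneg (r-1), sq_nonneg p, sq_nonneg q]
      have l1 : p + q = 0 := (mul_eq_zero.mp e1).resolve_right (ne_of_gt pos1)
      have l2 : p - q = 0 := (mul_eq_zero.mp e2).resolve_right (ne_of_gt pos2)
      have hp : p = 0 := by linarith
      have hq0 : q = 0 := by linarith
      rw [hp, hq0] at h3
      exact Or.inl ⟨hp, hq0, lastvar r (by linear_combination h3)⟩
  · rcases mul_eq_zero.mp hC with hC' | hC'
    · exact caseSq p q r h1 (by linarith) hB'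
    · have e1 : (q+r)*(2*p+(p^2+q^2+r^2+3)) = 0 := by linear_combination hA' + hC'
      have e2 : (q-r)*((p^2+q^2+r^2+3)-2*p) = 0 := by linear_combination hC' - hA'
      have pos1 : 2*p+(p^2+q^2+r^2+3) > 0 := by nlinarith [sq_nonneg (p+1), sq_nonneg q, sq_nonneg r]
      have pos2 : (p^2+q^2+r^2+3)-2*p > 0 := by nlinarith [sq_nonneg (p-1), sq_nonneg q, sq_nonneg r]
      have l1 : q + r = 0 := (mul_eq_zero.mp e1).resolve_right (ne_of_gt pos1)
      have l2 : q - r = 0 := (mul_eq_zero.mp e2).resolve_right (ne_of_gt pos2)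
      have hq0 : q = 0 := by linarith
      have hr0 : r = 0 := by linarith
      rw [hq0, hr0] at h1
      exact Or.inl ⟨lastvar p (by linear_combination h1), hq0, hr0⟩
  · have e1 : (p+r)*(2*q+(p^2+q^2+r^2+3)) = 0 := by linear_combination hA' + hB'
    have e2 : (p-r)*((p^2+q^2+r^2+3)-2*q) = 0 := by linear_combination hB' - hA'
    have pos1 : 2*q+(p^2+q^2+r^2+3) > 0 := by nlinarith [sq_nonneg (q+1), sq_nonneg p, sq_nonneg r]
    have pos2 : (p^2+q^2+r^2+3)-2*q > 0 := by nlinarith [sq_nonneg (q-1), sq_nonneg p, sq_nonneg r]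
    have l1 : p + r = 0 := (mul_eq_zero.mp e1).resolve_right (ne_of_gt pos1)
    have l2 : p - r = 0 := (mul_eq_zero.mp e2).resolve_right (ne_of_gt pos2)
    have hp : p = 0 := by linarith
    have hr0 : r = 0 := by linarith
    rw [hp, hr0] at h2
    exact Or.inl ⟨hp, lastvar q (by linear_combination h2), hr0⟩

lemma norm_sq3 (y : EuclideanSpace ℝ (Fin 3)) : ‖y‖^2 = y 0^2 + y 1^2 + y 2^2 := by
  rw [EuclideanSpace.norm_eq, Real.sq_sqrt (by positivity), Fin.sum_univ_three]
  simp [Real.norm_eq_abs, sq_abs]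

lemma tp0 : tetraPoles 0 = pt 1 1 1 := rfl
lemma tp1 : tetraPoles 1 = pt 1 (-1) (-1) := rfl
lemma tp2 : tetraPoles 2 = pt (-1) 1 (-1) := rfl
lemma tp3 : tetraPoles 3 = pt (-1) (-1) 1 := rfl

lemma pt_apply0 (a b c : ℝ) : pt a b c 0 = a := rfl
lemma pt_apply1 (a b c : ℝ) : pt a b c 1 = b := rfl
lemma pt_apply2 (a b c : ℝ) : pt a b c 2 = c := rfl

lemma normsq_pt (a b c d e f : ℝ) :
    ‖pt a b c - pt d e f‖^2 = (a-d)^2+(b-e)^2+(c-f)^2 := by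
  rw [norm_sq3]; simp [pt]

lemma pt_ne (a b c d e f : ℝ) (h : a ≠ d) : pt a b c ≠ pt d e f := by
  intro h'
  exact h (by simpa [pt] using congrArg (fun y : EuclideanSpace ℝ (Fin 3) => y 0) h')

set_option maxHeartbeats 2000000 in
/-- For the tetrahedral `N = 3` JNR data with equal unit weights, the
set of zeros of `ζ(x) = Σᵢ (x − aᵢ)/‖x − aᵢ‖²` away from the poles is exactly
`{(0,0,0)} ∪ {(±1/3, ±1/3, ±1/3) with an even number of minus signs}`. -/
theorem jnr_tetrahedral_locations :
    {x : EuclideanSpace ℝ (Fin 3) |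
        (∀ i, x ≠ tetraPoles i) ∧
          ∑ i, ((1 : ℝ) / ‖x - tetraPoles i‖ ^ 2) • (x - tetraPoles i) = 0}
      = {pt 0 0 0, pt (1/3) (1/3) (1/3), pt (1/3) (-(1/3)) (-(1/3)),
          pt (-(1/3)) (1/3) (-(1/3)), pt (-(1/3)) (-(1/3)) (1/3)} := by
  ext x
  simp only [Set.mem_setOf_eq, Set.mem_insert_iff, Set.mem_singleton_iff]
  constructor
  · rintro ⟨hx, hsum⟩
    have hd0 : ‖x - tetraPoles 0‖^2 = (x 0 - 1)^2 + (x 1 - 1)^2 + (x 2 - 1)^2 := by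
      rw [norm_sq3]
      simp only [tp0, PiLp.sub_apply, pt_apply0, pt_apply1, pt_apply2]
    have hd1 : ‖x - tetraPoles 1‖^2 = (x 0 - 1)^2 + (x 1 + 1)^2 + (x 2 + 1)^2 := by
      rw [norm_sq3]
      simp only [tp1, PiLp.sub_apply, pt_apply0, pt_apply1, pt_apply2]
      ring
    have hd2 : ‖x - tetraPoles 2‖^2 = (x 0 + 1)^2 + (x 1 - 1)^2 + (x 2 + 1)^2 := by
      rw [norm_sq3]
      simp only [tp2, PiLp.sub_apply, pt_apply0, pt_apply1, pt_apply2]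
      ring
    have hd3 : ‖x - tetraPoles 3‖^2 = (x 0 + 1)^2 + (x 1 + 1)^2 + (x 2 - 1)^2 := by
      rw [norm_sq3]
      simp only [tp3, PiLp.sub_apply, pt_apply0, pt_apply1, pt_apply2]
      ring
    have hn0 : (x 0 - 1)^2 + (x 1 - 1)^2 + (x 2 - 1)^2 ≠ 0 := by
      rw [← hd0]; exact pow_ne_zero 2 (norm_ne_zero_iff.mpr (sub_ne_zero_of_ne (hx 0)))
    have hn1 : (x 0 - 1)^2 + (x 1 + 1)^2 + (x 2 + 1)^2 ≠ 0 := by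
      rw [← hd1]; exact pow_ne_zero 2 (norm_ne_zero_iff.mpr (sub_ne_zero_of_ne (hx 1)))
    have hn2 : (x 0 + 1)^2 + (x 1 - 1)^2 + (x 2 + 1)^2 ≠ 0 := by
      rw [← hd2]; exact pow_ne_zero 2 (norm_ne_zero_iff.mpr (sub_ne_zero_of_ne (hx 2)))
    have hn3 : (x 0 + 1)^2 + (x 1 + 1)^2 + (x 2 - 1)^2 ≠ 0 := by
      rw [← hd3]; exact pow_ne_zero 2 (norm_ne_zero_iff.mpr (sub_ne_zero_of_ne (hx 3)))
    rw [Fin.sum_univ_four, hd0, hd1, hd2, hd3] at hsum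
    have h0 := congrArg (fun y : EuclideanSpace ℝ (Fin 3) => y 0) hsum
    have h1 := congrArg (fun y : EuclideanSpace ℝ (Fin 3) => y 1) hsum
    have h2 := congrArg (fun y : EuclideanSpace ℝ (Fin 3) => y 2) hsum
    simp only [PiLp.add_apply, PiLp.smul_apply, PiLp.sub_apply, PiLp.zero_apply, smul_eq_mul,
      tp0, tp1, tp2, tp3, pt_apply0, pt_apply1, pt_apply2] at h0 h1 h2
    have hF1 : (x 0)*(((x 0)^2+(x 1)^2+(x 2)^2)^3+3*((x 0)^2+(x 1)^2+(x 2)^2)^2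
          -5*((x 0)^2+(x 1)^2+(x 2)^2)+9+16*(x 0)^2)
          - 8*(x 1)*(x 2)*(2*(x 0)^2+((x 0)^2+(x 1)^2+(x 2)^2+3)) = 0 := by
      have key : (x 0)*(((x 0)^2+(x 1)^2+(x 2)^2)^3+3*((x 0)^2+(x 1)^2+(x 2)^2)^2
          -5*((x 0)^2+(x 1)^2+(x 2)^2)+9+16*(x 0)^2)
          - 8*(x 1)*(x 2)*(2*(x 0)^2+((x 0)^2+(x 1)^2+(x 2)^2+3))
          = (((x 0 - 1)^2 + (x 1 - 1)^2 + (x 2 - 1)^2) * ((x 0 - 1)^2 + (x 1 + 1)^2 + (x 2 + 1)^2)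
            * ((x 0 + 1)^2 + (x 1 - 1)^2 + (x 2 + 1)^2) * ((x 0 + 1)^2 + (x 1 + 1)^2 + (x 2 - 1)^2))/4
            * (1 / ((x 0 - 1)^2 + (x 1 - 1)^2 + (x 2 - 1)^2) * (x 0 - 1)
             + 1 / ((x 0 - 1)^2 + (x 1 + 1)^2 + (x 2 + 1)^2) * (x 0 - 1)
             + 1 / ((x 0 + 1)^2 + (x 1 - 1)^2 + (x 2 + 1)^2) * (x 0 - -1)
             + 1 / ((x 0 + 1)^2 + (x 1 + 1)^2 + (x 2 - 1)^2) * (x 0 - -1)) := by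
        field_simp
        ring
      rw [key, h0, mul_zero]
    have hF2 : (x 1)*(((x 0)^2+(x 1)^2+(x 2)^2)^3+3*((x 0)^2+(x 1)^2+(x 2)^2)^2
          -5*((x 0)^2+(x 1)^2+(x 2)^2)+9+16*(x 1)^2)
          - 8*(x 0)*(x 2)*(2*(x 1)^2+((x 0)^2+(x 1)^2+(x 2)^2+3)) = 0 := by
      have key : (x 1)*(((x 0)^2+(x 1)^2+(x 2)^2)^3+3*((x 0)^2+(x 1)^2+(x 2)^2)^2
          -5*((x 0)^2+(x 1)^2+(x 2)^2)+9+16*(x 1)^2)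
          - 8*(x 0)*(x 2)*(2*(x 1)^2+((x 0)^2+(x 1)^2+(x 2)^2+3))
          = (((x 0 - 1)^2 + (x 1 - 1)^2 + (x 2 - 1)^2) * ((x 0 - 1)^2 + (x 1 + 1)^2 + (x 2 + 1)^2)
            * ((x 0 + 1)^2 + (x 1 - 1)^2 + (x 2 + 1)^2) * ((x 0 + 1)^2 + (x 1 + 1)^2 + (x 2 - 1)^2))/4
            * (1 / ((x 0 - 1)^2 + (x 1 - 1)^2 + (x 2 - 1)^2) * (x 1 - 1)
             + 1 / ((x 0 - 1)^2 + (x 1 + 1)^2 + (x 2 + 1)^2) * (x 1 - -1)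
             + 1 / ((x 0 + 1)^2 + (x 1 - 1)^2 + (x 2 + 1)^2) * (x 1 - 1)
             + 1 / ((x 0 + 1)^2 + (x 1 + 1)^2 + (x 2 - 1)^2) * (x 1 - -1)) := by
        field_simp
        ring
      rw [key, h1, mul_zero]
    have hF3 : (x 2)*(((x 0)^2+(x 1)^2+(x 2)^2)^3+3*((x 0)^2+(x 1)^2+(x 2)^2)^2
          -5*((x 0)^2+(x 1)^2+(x 2)^2)+9+16*(x 2)^2)
          - 8*(x 0)*(x 1)*(2*(x 2)^2+((x 0)^2+(x 1)^2+(x 2)^2+3)) = 0 := by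
      have key : (x 2)*(((x 0)^2+(x 1)^2+(x 2)^2)^3+3*((x 0)^2+(x 1)^2+(x 2)^2)^2
          -5*((x 0)^2+(x 1)^2+(x 2)^2)+9+16*(x 2)^2)
          - 8*(x 0)*(x 1)*(2*(x 2)^2+((x 0)^2+(x 1)^2+(x 2)^2+3))
          = (((x 0 - 1)^2 + (x 1 - 1)^2 + (x 2 - 1)^2) * ((x 0 - 1)^2 + (x 1 + 1)^2 + (x 2 + 1)^2)
            * ((x 0 + 1)^2 + (x 1 - 1)^2 + (x 2 + 1)^2) * ((x 0 + 1)^2 + (x 1 + 1)^2 + (x 2 - 1)^2))/4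
            * (1 / ((x 0 - 1)^2 + (x 1 - 1)^2 + (x 2 - 1)^2) * (x 2 - 1)
             + 1 / ((x 0 - 1)^2 + (x 1 + 1)^2 + (x 2 + 1)^2) * (x 2 - -1)
             + 1 / ((x 0 + 1)^2 + (x 1 - 1)^2 + (x 2 + 1)^2) * (x 2 - -1)
             + 1 / ((x 0 + 1)^2 + (x 1 + 1)^2 + (x 2 - 1)^2) * (x 2 - 1)) := by
        field_simp
        ring
      rw [key, h2, mul_zero]
    rcases solve3 (x 0) (x 1) (x 2) hF1 hF2 hF3 with
      ⟨hp, hq, hr⟩ | ⟨hp, hq, hr⟩ | ⟨hp, hq, hr⟩ | ⟨hp, hq, hr⟩ | ⟨hp, hq, hr⟩ |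
      ⟨hp, hq, hr⟩ | ⟨hp, hq, hr⟩ | ⟨hp, hq, hr⟩ | ⟨hp, hq, hr⟩
    · exact Or.inl (by ext j; fin_cases j <;> first | exact hp | exact hq | exact hr)
    · exact Or.inr (Or.inl (by ext j; fin_cases j <;> first | exact hp | exact hq | exact hr))
    · exact Or.inr (Or.inr (Or.inl (by ext j; fin_cases j <;> first | exact hp | exact hq | exact hr)))
    · exact Or.inr (Or.inr (Or.inr (Or.inl (by ext j; fin_cases j <;> first | exact hp | exact hq | exact hr))))
    · exact Or.inr (Or.inr (Or.inr (Or.inr (by ext j; fin_cases j <;> first | exact hp | exact hq | exact hr))))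
    · exact absurd (show x = tetraPoles 0 by rw [tp0]; ext j; fin_cases j <;> first | exact hp | exact hq | exact hr) (hx 0)
    · exact absurd (show x = tetraPoles 1 by rw [tp1]; ext j; fin_cases j <;> first | exact hp | exact hq | exact hr) (hx 1)
    · exact absurd (show x = tetraPoles 2 by rw [tp2]; ext j; fin_cases j <;> first | exact hp | exact hq | exact hr) (hx 2)
    · exact absurd (show x = tetraPoles 3 by rw [tp3]; ext j; fin_cases j <;> first | exact hp | exact hq | exact hr) (hx 3)
  · rintro (rfl | rfl | rfl | rfl | rfl) <;>
      refine ⟨fun i => by fin_cases i <;> exact pt_ne _ _ _ _ _ _ (by norm_num), ?_⟩ <;>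
      · rw [Fin.sum_univ_four, tp0, tp1, tp2, tp3, normsq_pt, normsq_pt, normsq_pt, normsq_pt]
        ext j
        fin_cases j <;> simp [pt] <;> norm_num
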